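/- Let q ∈ [1,2] and equip ℝ^d with the ℓ_q norm ‖·‖_q. Let x_0, x_1, …, x_n ∈ ℝ^d with n ≥ 1, let r > 0, β > 0, α ≥ 1, c ∈ (0,1), and let N_β = |{(i,j) : 1 ≤ i < j ≤ n, ‖x_i − x_j‖_q ≤ βr}|. Suppose the finite set {x_0, x_1, …, x_n} (with the ℓ_q metric) has doubling dimension at most d_0 + 1, i.e., every subset Y of it can be covered by at most 2^{d_0+1} subsets each of ℓ_q-diameter at most half the ℓ_q-diameter of Y. Set M = (1 + 8α/β)^{(d_0+1)/2} · √(2N_β + 2n) and choose the real parameter K = (1/α) · log M / log(1/c). Then c^{−K} · (1 + Σ_{i : ‖x_i − x_0‖_q ≥ αr} c^{K·‖x_i − x_0‖_q / r}) ≤ 3 · (1 + 8α/β)^{(d_0+1)/(2α)} · (2N_β + 2n)^{1/(2α)}. -/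

import Mathlib

open scoped ENNReal

lemma iterated_doubling {E : Type*} [PseudoEMetricSpace E] (S : Set E) (D : ℕ)
    (hdbl : ∀ Y : Set E, Y ⊆ S → ∃ f : Fin D → Set E,
        Y ⊆ ⋃ i, f i ∧ ∀ i, EMetric.diam (f i) ≤ EMetric.diam Y / 2) :
    ∀ s : ℕ, ∀ Y : Set E, Y ⊆ S → ∃ f : Fin (D ^ s) → Set E,
      Y ⊆ ⋃ i, f i ∧ ∀ i, EMetric.diam (f i) ≤ EMetric.diam Y / 2 ^ s := by
  intro s
  induction s with
  | zero =>
    intro Y hY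
    exact ⟨fun _ => Y, fun y hy => Set.mem_iUnion.mpr ⟨⟨0, Nat.pos_of_ne_zero (by simp)⟩, hy⟩, by simp⟩
  | succ s ih =>
    intro Y hY
    obtain ⟨f, hf, hfd⟩ := ih Y hY
    choose g hg hgd using fun i : Fin (D ^ s) => hdbl (f i ∩ Y) ((Set.inter_subset_right).trans hY)
    refine ⟨fun k => (fun p : Fin (D ^ s) × Fin D => g p.1 p.2)
      ((finProdFinEquiv (m := D ^ s) (n := D)).symm (Fin.cast (by rw [pow_succ]) k)), ?_, ?_⟩
    · intro y hy
      obtain ⟨i, hi⟩ := Set.mem_iUnion.mp (hf hy)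
      obtain ⟨j, hj⟩ := Set.mem_iUnion.mp (hg i ⟨hi, hy⟩)
      refine Set.mem_iUnion.mpr ⟨Fin.cast (by rw [pow_succ]) (finProdFinEquiv (i, j)), ?_⟩
      simpa using hj
    · intro k
      refine le_trans (hgd _ _) ?_
      refine le_trans (ENNReal.div_le_div_right
        (le_trans (EMetric.diam_mono Set.inter_subset_left) (hfd _)) 2) ?_
      rw [pow_succ, div_eq_mul_inv, div_eq_mul_inv, div_eq_mul_inv,
        ENNReal.mul_inv (Or.inl (by positivity)) (Or.inl (by simp)), ← mul_assoc]

open Finset in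
lemma pair_counting {ι E : Type*} [Fintype ι] [LinearOrder ι] [DecidableEq ι]
    [PseudoMetricSpace E] (x : ι → E) (w : ℝ) (T : Finset ι) {t : ℕ} (g : ι → Fin t)
    (hg : ∀ i ∈ T, ∀ i' ∈ T, g i = g i' → dist (x i) (x i') ≤ w) :
    (T.card : ℝ) ^ 2 ≤ (t : ℝ) * (2 * ((univ.filter fun ij : ι × ι =>
      ij.1 < ij.2 ∧ dist (x ij.1) (x ij.2) ≤ w).card : ℝ) + (T.card : ℝ)) := by
  classical
  set P : Finset (ι × ι) := univ.filter fun ij : ι × ι =>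
      ij.1 < ij.2 ∧ dist (x ij.1) (x ij.2) ≤ w with hP
  set m : Fin t → ℕ := fun k => (T.filter fun i => g i = k).card with hm
  -- card T = sum of fibers
  have hcard : T.card = ∑ k : Fin t, m k :=
    Finset.card_eq_sum_card_fiberwise (fun i _ => Finset.mem_univ (g i))
  -- Cauchy-Schwarz
  have hCS : ((T.card : ℝ)) ^ 2 ≤ (t : ℝ) * ∑ k : Fin t, ((m k : ℝ)) ^ 2 := by
    have := sq_sum_le_card_mul_sum_sq (s := (univ : Finset (Fin t)))
      (f := fun k => ((m k : ℝ)))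
    simpa [hcard, Nat.cast_sum] using this
  -- the fiber-pair set
  set U : Finset (ι × ι) := (T ×ˢ T).filter fun p => g p.1 = g p.2 with hU
  have hUcard : ∑ k : Fin t, (m k) ^ 2 = U.card := by
    have : U = univ.biUnion fun k : Fin t =>
        (T.filter fun i => g i = k) ×ˢ (T.filter fun i => g i = k) := by
      ext p
      simp only [hU, Finset.mem_filter, Finset.mem_product, Finset.mem_biUnion,
        Finset.mem_univ, true_and]
      constructor
      · rintro ⟨⟨h1, h2⟩, h3⟩
        exact ⟨g p.1, ⟨⟨h1, rfl⟩, ⟨h2, h3.symm⟩⟩⟩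
      · rintro ⟨k, ⟨⟨h1, e1⟩, ⟨h2, e2⟩⟩⟩
        exact ⟨⟨h1, h2⟩, by rw [e1, e2]⟩
    rw [this, Finset.card_biUnion]
    · simp [hm, sq, Finset.card_product]
    · intro k _ k' _ hkk'
      refine Finset.disjoint_left.mpr ?_
      rintro p hp hp'
      simp only [Finset.mem_product, Finset.mem_filter] at hp hp'
      exact hkk' (hp.1.2.symm.trans hp'.1.2)
  -- card U ≤ T.card + 2 * P.card
  have hdiag : (U.filter fun p => p.1 = p.2).card ≤ T.card := by
    apply Finset.card_le_card_of_injOn (fun p => p.1)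
    · intro p hp
      rw [Finset.mem_coe, Finset.mem_filter, hU, Finset.mem_filter, Finset.mem_product] at hp
      exact hp.1.1.1
    · intro p hp p' hp' h
      simp only [Finset.mem_coe, Finset.mem_filter] at hp hp'
      have h1 : p.1 = p'.1 := h
      refine Prod.ext h1 ?_
      rw [← hp.2, ← hp'.2]
      exact h1
  have hlt : (U.filter fun p => p.1 < p.2).card ≤ P.card := by
    apply Finset.card_le_card
    intro p hp
    simp only [Finset.mem_filter, hU, Finset.mem_product, hP, Finset.mem_univ, true_and] at hp ⊢
    exact ⟨hp.2, hg p.1 hp.1.1.1 p.2 hp.1.1.2 hp.1.2⟩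
  have hgt : (U.filter fun p => p.2 < p.1).card ≤ P.card := by
    have : (U.filter fun p => p.2 < p.1).card = ((U.filter fun p => p.2 < p.1).image
        fun p => (p.2, p.1)).card := by
      rw [Finset.card_image_of_injOn]
      rintro p _ p' _ h
      exact Prod.ext (congrArg Prod.snd h) (congrArg Prod.fst h)
    rw [this]
    apply Finset.card_le_card
    intro p hp
    simp only [Finset.mem_image, Finset.mem_filter, hU, Finset.mem_product, hP,
      Finset.mem_univ, true_and] at hp ⊢
    obtain ⟨q, ⟨⟨⟨hq1, hq2⟩, hq3⟩, hq4⟩, hq5⟩ := hp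
    subst hq5
    exact ⟨hq4, by rw [dist_comm]; exact hg q.1 hq1 q.2 hq2 hq3⟩
  have hsplit : U.card ≤ T.card + 2 * P.card := by
    have : U = (U.filter fun p => p.1 = p.2) ∪ ((U.filter fun p => p.1 < p.2) ∪
        (U.filter fun p => p.2 < p.1)) := by
      ext p
      simp only [Finset.mem_union, Finset.mem_filter]
      constructor
      · intro hp
        rcases lt_trichotomy p.1 p.2 with h | h | h
        · exact Or.inr (Or.inl ⟨hp, h⟩)
        · exact Or.inl ⟨hp, h⟩
        · exact Or.inr (Or.inr ⟨hp, h⟩)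
      · rintro (h | h | h) <;> exact h.1
    calc U.card = ((U.filter fun p => p.1 = p.2) ∪ ((U.filter fun p => p.1 < p.2) ∪
          (U.filter fun p => p.2 < p.1))).card := by rw [← this]
      _ ≤ (U.filter fun p => p.1 = p.2).card + ((U.filter fun p => p.1 < p.2) ∪
          (U.filter fun p => p.2 < p.1)).card := Finset.card_union_le _ _
      _ ≤ (U.filter fun p => p.1 = p.2).card + ((U.filter fun p => p.1 < p.2).card
        + (U.filter fun p => p.2 < p.1).card) := by
          gcongr
          exact Finset.card_union_le _ _
      _ ≤ T.card + (P.card + P.card) := by gcongr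
      _ = T.card + 2 * P.card := by ring
  calc ((T.card : ℝ)) ^ 2 ≤ (t : ℝ) * ∑ k : Fin t, ((m k : ℝ)) ^ 2 := hCS
    _ = (t : ℝ) * (U.card : ℝ) := by
        rw [← hUcard]; push_cast; ring
    _ ≤ (t : ℝ) * (2 * (P.card : ℝ) + (T.card : ℝ)) := by
        have : (U.card : ℝ) ≤ (T.card : ℝ) + 2 * (P.card : ℝ) := by exact_mod_cast hsplit
        nlinarith [Nat.cast_nonneg (α := ℝ) t]

set_option maxHeartbeats 2000000 in
/-- Proposition 8 (analytic core, `p`-stable LSH in `ℓ_q`, `q ∈ [1,2]`, `ρ(s) = 1/s`):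
if `{x₀, x₁, …, xₙ} ⊆ (ℝ^d, ‖·‖_q)` has doubling dimension at most `d₀ + 1`,
`M = (1 + 8α/β)^{(d₀+1)/2} √(2N_β + 2n)` and `K = (1/α)·log M / log(1/c)`, then
`c^{-K} (1 + Σ_{i : ‖x_i − x₀‖_q ≥ αr} c^{K‖x_i − x₀‖_q/r})
  ≤ 3 (1 + 8α/β)^{(d₀+1)/(2α)} (2N_β + 2n)^{1/(2α)}`. -/
theorem lp_doubling_lsh_query_bound {d n : ℕ} (hn : 0 < n)
    (q : ℝ≥0∞) [Fact (1 ≤ q)] (hq2 : q ≤ 2)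
    (x₀ : PiLp q fun _ : Fin d => ℝ) (x : Fin n → PiLp q fun _ : Fin d => ℝ)
    (r β α c : ℝ) (hr : 0 < r) (hβ : 0 < β) (hα : 1 ≤ α) (hc0 : 0 < c) (hc1 : c < 1)
    (d₀ : ℕ)
    (hdbl : ∀ Y : Set (PiLp q fun _ : Fin d => ℝ), Y ⊆ insert x₀ (Set.range x) →
      ∃ f : Fin (2 ^ (d₀ + 1)) → Set (PiLp q fun _ : Fin d => ℝ),
        Y ⊆ ⋃ i, f i ∧ ∀ i, EMetric.diam (f i) ≤ EMetric.diam Y / 2)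
    (Nβ : ℕ)
    (hNβ : Nβ = (Finset.univ.filter fun ij : Fin n × Fin n =>
        ij.1 < ij.2 ∧ dist (x ij.1) (x ij.2) ≤ β * r).card)
    (M K : ℝ)
    (hM : M = (1 + 8 * α / β) ^ (((d₀ : ℝ) + 1) / 2) *
        Real.sqrt (2 * (Nβ : ℝ) + 2 * (n : ℝ)))
    (hK : K = (1 / α) * Real.log M / Real.log (1 / c)) :
    c ^ (-K) * (1 + ∑ i ∈ Finset.univ.filter fun i : Fin n => α * r ≤ dist (x i) x₀,
        c ^ (K * dist (x i) x₀ / r)) ≤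
      3 * (1 + 8 * α / β) ^ (((d₀ : ℝ) + 1) / (2 * α)) *
        (2 * (Nβ : ℝ) + 2 * (n : ℝ)) ^ ((1 : ℝ) / (2 * α)) := by
  classical
  have hα0 : (0:ℝ) < α := lt_of_lt_of_le one_pos hα
  have hαr : 0 < α * r := mul_pos hα0 hr
  have hβr : 0 < β * r := mul_pos hβ hr
  set A : ℝ := 1 + 8 * α / β with hA
  have hA1 : 1 ≤ A := le_add_of_nonneg_right (by positivity)
  have hA0 : (0:ℝ) < A := lt_of_lt_of_le one_pos hA1
  set B : ℝ := 2 * (Nβ : ℝ) + 2 * (n : ℝ) with hB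
  have hB2 : 2 ≤ B := by
    have h1 : (1:ℝ) ≤ (n:ℝ) := by exact_mod_cast hn
    have h2 : (0:ℝ) ≤ (Nβ:ℝ) := Nat.cast_nonneg _
    rw [hB]; nlinarith
  have hB0 : (0:ℝ) < B := lt_of_lt_of_le two_pos hB2
  have hM1 : 1 ≤ M := by
    rw [hM]
    have h1 : 1 ≤ A ^ (((d₀:ℝ)+1)/2) := Real.one_le_rpow hA1 (by positivity)
    have h2 : 1 ≤ Real.sqrt B := by
      rw [show (1:ℝ) = Real.sqrt 1 from Real.sqrt_one.symm]
      exact Real.sqrt_le_sqrt (le_trans one_le_two hB2)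
    nlinarith
  have hM0 : (0:ℝ) < M := lt_of_lt_of_le one_pos hM1
  have hL0 : 0 ≤ Real.log M := Real.log_nonneg hM1
  have hlogc : Real.log c < 0 := Real.log_neg hc0 hc1
  have hlogc' : Real.log c ≠ 0 := ne_of_lt hlogc
  have hKlogc : K * Real.log c = -(Real.log M / α) := by
    rw [hK, show Real.log (1/c) = -Real.log c by rw [one_div, Real.log_inv]]
    field_simp
  have hterm : ∀ i : Fin n, c ^ (K * dist (x i) x₀ / r)
      = Real.exp (-(Real.log M / α) * (dist (x i) x₀ / r)) := by
    intro i
    rw [Real.rpow_def_of_pos hc0]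
    congr 1
    rw [show Real.log c * (K * dist (x i) x₀ / r)
      = (K * Real.log c) * (dist (x i) x₀ / r) by ring, hKlogc]
  have hcK : c ^ (-K) = M ^ ((1:ℝ)/α) := by
    rw [Real.rpow_def_of_pos hc0, Real.rpow_def_of_pos hM0]
    congr 1
    rw [show Real.log c * (-K) = -(K * Real.log c) by ring, hKlogc, neg_neg]
    ring
  set Far : Finset (Fin n) :=
    Finset.univ.filter (fun i : Fin n => α * r ≤ dist (x i) x₀) with hFar
  -- annulus index function
  have hex : ∀ i : Fin n, ∃ m : ℕ, dist (x i) x₀ / (α*r) < 2^(m+1) := by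
    intro i
    obtain ⟨m, hm⟩ := pow_unbounded_of_one_lt (dist (x i) x₀ / (α*r)) (one_lt_two (α := ℝ))
    exact ⟨m, hm.trans_le (pow_le_pow_right₀ one_le_two (Nat.le_succ m))⟩
  set jf : Fin n → ℕ := fun i => Nat.find (hex i) with hjf
  have hjf_ub : ∀ i, dist (x i) x₀ / (α*r) < 2^(jf i + 1) := fun i => Nat.find_spec (hex i)
  have hd_ub : ∀ i, dist (x i) x₀ < 2^(jf i + 1) * (α*r) := by
    intro i
    have := hjf_ub i
    rwa [div_lt_iff₀ hαr] at this
  have hd_lb : ∀ i ∈ Far, (2:ℝ)^(jf i) * (α*r) ≤ dist (x i) x₀ := by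
    intro i hi
    rw [hFar, Finset.mem_filter] at hi
    rcases Nat.eq_zero_or_pos (jf i) with h0 | hpos
    · rw [h0, pow_zero, one_mul]; exact hi.2
    · have hmin := Nat.find_min (hex i) (show jf i - 1 < jf i from Nat.sub_lt hpos one_pos)
      push_neg at hmin
      have e : jf i - 1 + 1 = jf i := by omega
      rw [e] at hmin
      exact (le_div_iff₀ hαr).mp hmin
  -- the covering scale function
  have hsex : ∀ j : ℕ, ∃ s : ℕ, (2:ℝ)^(j+2) * α ≤ 2^s * β := by
    intro j
    obtain ⟨m, hm⟩ := pow_unbounded_of_one_lt ((2:ℝ)^(j+2)*α/β) (one_lt_two (α := ℝ))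
    rw [div_lt_iff₀ hβ] at hm
    exact ⟨m, hm.le⟩
  set sf : ℕ → ℕ := fun j => Nat.find (hsex j) with hsf
  have hsf_spec : ∀ j, (2:ℝ)^(j+2) * α ≤ 2^(sf j) * β := fun j => Nat.find_spec (hsex j)
  have hsf_le : ∀ j, (2:ℝ)^(sf j) ≤ A ^ (2^j : ℕ) := by
    intro j
    rcases Nat.eq_zero_or_pos (sf j) with h0 | hpos
    · rw [h0, pow_zero]
      exact one_le_pow₀ hA1
    · have hmin := Nat.find_min (hsex j) (show sf j - 1 < sf j from Nat.sub_lt hpos one_pos)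
      push_neg at hmin
      obtain ⟨u, hu⟩ : ∃ u, sf j = u + 1 := ⟨sf j - 1, by omega⟩
      rw [hu] at hmin ⊢
      simp only [Nat.add_sub_cancel] at hmin
      have h2 : (2:ℝ)^(u+1) * β < 2^(j+3) * α := by
        rw [pow_succ, show (2:ℝ)^(j+3) = 2^(j+2)*2 from pow_succ 2 (j+2)]
        nlinarith [hmin]
      have hBern : 1 + (2:ℝ)^j * (8*α/β) ≤ A ^ (2^j : ℕ) := by
        have hb := one_add_mul_le_pow (a := 8*α/β) (le_trans (by norm_num : (-2:ℝ) ≤ 0) (by positivity)) (2^j)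
        have e4 : ((2^j : ℕ) : ℝ) = (2:ℝ)^j := by push_cast; ring
        rw [e4] at hb
        rw [hA]
        exact hb
      have hkey : (2:ℝ)^(u+1) < (2:ℝ)^j * (8*α/β) := by
        have e3 : (2:ℝ)^j * (8*α/β) = 2^(j+3)*α/β := by
          rw [pow_add]; ring
        rw [e3, lt_div_iff₀ hβ]
        exact h2
      calc (2:ℝ)^(u+1) ≤ (2:ℝ)^j * (8*α/β) := hkey.le
        _ ≤ 1 + (2:ℝ)^j * (8*α/β) := by linarith
        _ ≤ A ^ (2^j:ℕ) := hBern
  set C : ℝ := A ^ (d₀ + 1) with hC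
  have hC1 : 1 ≤ C := one_le_pow₀ hA1
  have hC0 : (0:ℝ) ≤ C := le_trans zero_le_one hC1
  have hM2 : M^2 = C * B := by
    rw [hM, mul_pow, Real.sq_sqrt hB0.le, ← Real.rpow_natCast (A ^ (((d₀:ℝ)+1)/2)) 2,
      ← Real.rpow_mul hA0.le,
      show (((d₀:ℝ)+1)/2)*((2:ℕ):ℝ) = (((d₀+1 : ℕ)):ℝ) by push_cast; ring,
      Real.rpow_natCast, hC]
  -- per-annulus cardinality bound
  have hTbound : ∀ j : ℕ,
      ((Far.filter (fun i => jf i = j)).card : ℝ)^2 ≤ C^(2^j) * B := by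
    intro j
    set T := Far.filter (fun i => jf i = j) with hT
    have hTsub : ∀ i ∈ T, i ∈ Far ∧ jf i = j := by
      intro i hi; rw [hT, Finset.mem_filter] at hi; exact hi
    have hYsub : x '' (T : Set (Fin n)) ⊆ insert x₀ (Set.range x) := by
      rintro p ⟨i, _, rfl⟩; exact Set.mem_insert_iff.mpr (Or.inr (Set.mem_range_self i))
    obtain ⟨f, hf, hfd⟩ := iterated_doubling _ _ hdbl (sf j) _ hYsub
    have hdiamY : EMetric.diam (x '' (T : Set (Fin n))) ≤ ENNReal.ofReal (2^(j+2) * (α*r)) := by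
      apply EMetric.diam_le
      rintro p ⟨i, hi, rfl⟩ p' ⟨i', hi', rfl⟩
      rw [edist_dist]
      apply ENNReal.ofReal_le_ofReal
      have h1 := hd_ub i
      have h2 := hd_ub i'
      rw [(hTsub i (Finset.mem_coe.mp hi)).2] at h1
      rw [(hTsub i' (Finset.mem_coe.mp hi')).2] at h2
      have h3 := dist_triangle_right (x i) (x i') x₀
      have e3 : (2:ℝ)^(j+2) = 2^(j+1) + 2^(j+1) := by rw [pow_succ]; ring
      nlinarith [h3]
    have hfd' : ∀ k, EMetric.diam (f k) ≤ ENNReal.ofReal (β*r) := by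
      intro k
      refine le_trans (hfd k) (le_trans (ENNReal.div_le_div_right hdiamY _) ?_)
      rw [ENNReal.div_le_iff_le_mul (Or.inl (pow_ne_zero _ (by norm_num)))
        (Or.inl (ENNReal.pow_ne_top (by norm_num)))]
      calc ENNReal.ofReal (2^(j+2)*(α*r)) ≤ ENNReal.ofReal ((β*r) * 2^(sf j)) := by
            apply ENNReal.ofReal_le_ofReal
            calc (2:ℝ)^(j+2)*(α*r) = (2^(j+2)*α)*r := by ring
              _ ≤ (2^(sf j)*β)*r := mul_le_mul_of_nonneg_right (hsf_spec j) hr.le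
              _ = (β*r)*2^(sf j) := by ring
        _ = ENNReal.ofReal (β*r) * 2^(sf j) := by
            rw [ENNReal.ofReal_mul hβr.le]
            congr 1
            rw [ENNReal.ofReal_pow (by norm_num : (0:ℝ) ≤ 2)]
            norm_num
    have ht0 : 0 < (2^(d₀+1))^(sf j) := pow_pos (pow_pos two_pos _) _
    set g : Fin n → Fin ((2^(d₀+1))^(sf j)) := fun i =>
      if h : ∃ k, x i ∈ f k then h.choose else ⟨0, ht0⟩ with hg
    have hmem : ∀ i ∈ T, x i ∈ f (g i) := by
      intro i hi
      have h : ∃ k, x i ∈ f k :=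
        Set.mem_iUnion.mp (hf (Set.mem_image_of_mem x (Finset.mem_coe.mpr hi)))
      rw [hg]
      simp only
      rw [dif_pos h]
      exact h.choose_spec
    have hgpair : ∀ i ∈ T, ∀ i' ∈ T, g i = g i' → dist (x i) (x i') ≤ β*r := by
      intro i hi i' hi' hgg
      have h1 := hmem i hi
      have h2 := hmem i' hi'
      rw [hgg] at h1
      have h3 := le_trans (EMetric.edist_le_diam_of_mem h1 h2) (hfd' (g i'))
      rw [edist_dist] at h3
      exact (ENNReal.ofReal_le_ofReal_iff hβr.le).mp h3
    have hpc := pair_counting x (β*r) T g hgpair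
    rw [← hNβ] at hpc
    have hTn : (T.card : ℝ) ≤ (n:ℝ) := by
      have h6 : T.card ≤ n := by simpa using Finset.card_le_univ T
      exact_mod_cast h6
    have htC : (((2^(d₀+1))^(sf j) : ℕ) : ℝ) ≤ C^(2^j) := by
      push_cast
      rw [show ((2:ℝ)^(d₀+1))^(sf j) = ((2:ℝ)^(sf j))^(d₀+1) from pow_right_comm 2 _ _,
        hC, pow_right_comm A _ _]
      exact pow_le_pow_left₀ (by positivity) (hsf_le j) _
    calc ((T.card:ℝ))^2 ≤ (((2^(d₀+1))^(sf j):ℕ):ℝ) * (2*(Nβ:ℝ) + (T.card:ℝ)) := hpc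
      _ ≤ C^(2^j) * B := by
          have h4 : 2*(Nβ:ℝ) + (T.card:ℝ) ≤ B := by
            rw [hB]; nlinarith [hTn]
          exact mul_le_mul htC h4 (by positivity) (le_trans (by positivity) htC)
  -- bound the sum by 2
  have hS : (∑ i ∈ Far, c ^ (K * dist (x i) x₀ / r)) ≤ 2 := by
    rcases Nat.lt_or_ge n 2 with hn2 | hn2
    · -- n = 1 : trivial bound
      have h1 : ∀ i ∈ Far, c ^ (K * dist (x i) x₀ / r) ≤ 1 := by
        intro i _
        rw [hterm i]
        rw [Real.exp_le_one_iff]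
        have : 0 ≤ (Real.log M / α) * (dist (x i) x₀ / r) := by positivity
        linarith
      calc (∑ i ∈ Far, c ^ (K * dist (x i) x₀ / r)) ≤ ∑ i ∈ Far, (1:ℝ) :=
            Finset.sum_le_sum h1
        _ = (Far.card : ℝ) := by rw [Finset.sum_const, nsmul_eq_mul, mul_one]
        _ ≤ 2 := by
            have h6 : Far.card ≤ n := by simpa using Finset.card_le_univ Far
            have h7 : (Far.card : ℝ) ≤ (n : ℝ) := by exact_mod_cast h6
            have h8 : (n:ℝ) ≤ 2 := by exact_mod_cast (show n ≤ 2 by omega)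
            linarith
    · -- n ≥ 2, so B ≥ 4
      have hB4 : (4:ℝ) ≤ B := by
        rw [hB]
        have : (2:ℝ) ≤ (n:ℝ) := by exact_mod_cast hn2
        nlinarith [Nat.cast_nonneg (α := ℝ) Nβ]
      have hjkey : ∀ j : ℕ, ((Far.filter (fun i => jf i = j)).card : ℝ) * (M^(2^j))⁻¹
          ≤ (1/2:ℝ)^j := by
        intro j
        have hcard2 := hTbound j
        set T := Far.filter (fun i => jf i = j) with hT
        have key' : (T.card:ℝ) * 2^(2^j) ≤ 2 * M^(2^j) := by
          have hsq : ((T.card:ℝ) * 2^(2^j))^2 ≤ (2*M^(2^j))^2 := by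
            have e5 : ((T.card:ℝ) * 2^(2^j))^2 = (T.card:ℝ)^2 * 4^(2^j) := by
              rw [mul_pow, pow_right_comm]; norm_num
            have e6 : ((2:ℝ)*M^(2^j))^2 = 4 * (C^(2^j) * B^(2^j)) := by
              rw [mul_pow, pow_right_comm, hM2, mul_pow]; norm_num
            have e7 : (4:ℝ)^(2^j) * B ≤ 4 * B^(2^j) := by
              obtain ⟨k, hk⟩ : ∃ k, 2^j = k + 1 :=
                ⟨2^j - 1, by have := Nat.one_le_two_pow (n := j); omega⟩
              rw [hk, pow_succ, pow_succ]
              have h9 : (4:ℝ)^k ≤ B^k := pow_le_pow_left₀ (by norm_num) hB4 k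
              nlinarith [pow_nonneg (le_of_lt hB0) k]
            rw [e5, e6]
            calc (T.card:ℝ)^2*4^(2^j) ≤ (C^(2^j)*B)*4^(2^j) :=
                  mul_le_mul_of_nonneg_right hcard2 (by positivity)
              _ = C^(2^j) * (4^(2^j)*B) := by ring
              _ ≤ C^(2^j) * (4*B^(2^j)) :=
                  mul_le_mul_of_nonneg_left e7 (pow_nonneg hC0 _)
              _ = 4*(C^(2^j)*B^(2^j)) := by ring
          exact (pow_le_pow_iff_left₀ (by positivity) (by positivity) two_ne_zero).mp hsq
        have h2j : (2:ℝ)^(j+1) ≤ 2^(2^j) :=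
          pow_le_pow_right₀ one_le_two (Nat.lt_two_pow_self (n := j))
        have h8 : (2:ℝ) ≤ (1/2)^j * 2^(2^j) := by
          have e9 : ((1:ℝ)/2)^j * 2^(j+1) = 2 := by
            rw [div_pow, one_pow, pow_succ]
            field_simp
          calc (2:ℝ) = (1/2)^j * 2^(j+1) := e9.symm
            _ ≤ (1/2)^j * 2^(2^j) := mul_le_mul_of_nonneg_left h2j (by positivity)
        rw [mul_inv_le_iff₀ (pow_pos hM0 _), mul_comm ((1/2:ℝ)^j)]
        calc (T.card:ℝ) ≤ 2*M^(2^j) / 2^(2^j) := by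
              rw [le_div_iff₀ (by positivity)]; exact key'
          _ ≤ (1/2)^j * M^(2^j) := by
              rw [div_le_iff₀ (by positivity : (0:ℝ) < 2^(2^j))]
              nlinarith [pow_pos hM0 (2^j)]
          _ = M^(2^j) * (1/2)^j := mul_comm _ _
      have helem : ∀ j : ℕ, ∀ i ∈ Far.filter (fun i => jf i = j),
          Real.exp (-(Real.log M/α) * (dist (x i) x₀ / r)) ≤ (M^(2^j))⁻¹ := by
        intro j i hi
        rw [Finset.mem_filter] at hi
        have hdl := hd_lb i hi.1
        rw [hi.2] at hdl
        have hdr : (2:ℝ)^j * α ≤ dist (x i) x₀ / r := by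
          rw [le_div_iff₀ hr]; nlinarith [hdl]
        have hexp : (2:ℝ)^j * Real.log M ≤ (Real.log M/α) * (dist (x i) x₀ / r) := by
          have h5 : (Real.log M/α) * ((2:ℝ)^j * α) = (2:ℝ)^j * Real.log M := by
            field_simp
          rw [← h5]
          exact mul_le_mul_of_nonneg_left hdr (by positivity)
        have hMpow : (M^(2^j))⁻¹ = Real.exp (-((2:ℝ)^j * Real.log M)) := by
          rw [Real.exp_neg]
          congr 1
          rw [← Real.exp_log (pow_pos hM0 (2^j)), Real.log_pow]
          congr 1
          push_cast
          ring
        rw [hMpow]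
        exact Real.exp_le_exp.mpr (by linarith)
      set J := (Finset.univ.sup jf) + 1 with hJ
      have hmaps : ∀ i ∈ Far, jf i ∈ Finset.range J := fun i _ =>
        Finset.mem_range.mpr (Nat.lt_succ_of_le (Finset.le_sup (Finset.mem_univ i)))
      calc (∑ i ∈ Far, c ^ (K * dist (x i) x₀ / r))
          = ∑ i ∈ Far, Real.exp (-(Real.log M/α) * (dist (x i) x₀ / r)) :=
            Finset.sum_congr rfl (fun i _ => hterm i)
        _ = ∑ j ∈ Finset.range J, ∑ i ∈ Far.filter (fun i => jf i = j),
              Real.exp (-(Real.log M/α) * (dist (x i) x₀ / r)) :=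
            (Finset.sum_fiberwise_of_maps_to hmaps _).symm
        _ ≤ ∑ j ∈ Finset.range J, (1/2:ℝ)^j := by
            apply Finset.sum_le_sum
            intro j _
            calc (∑ i ∈ Far.filter (fun i => jf i = j),
                  Real.exp (-(Real.log M/α) * (dist (x i) x₀ / r)))
                ≤ ∑ _i ∈ Far.filter (fun i => jf i = j), (M^(2^j))⁻¹ :=
                  Finset.sum_le_sum (helem j)
              _ = ((Far.filter (fun i => jf i = j)).card : ℝ) * (M^(2^j))⁻¹ := by
                  rw [Finset.sum_const, nsmul_eq_mul]
              _ ≤ (1/2:ℝ)^j := hjkey j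
        _ ≤ 2 := sum_geometric_two_le J
  -- conclusion
  have hRHS : M ^ ((1:ℝ)/α) = A ^ (((d₀:ℝ)+1)/(2*α)) * B ^ ((1:ℝ)/(2*α)) := by
    rw [hM, Real.sqrt_eq_rpow,
      Real.mul_rpow (Real.rpow_nonneg hA0.le _) (Real.rpow_nonneg hB0.le _),
      ← Real.rpow_mul hA0.le, ← Real.rpow_mul hB0.le]
    congr 1
    · congr 1
      ring
    · congr 1
      ring
  have hgoalR : (3:ℝ) * A ^ (((d₀:ℝ)+1)/(2*α)) * B ^ ((1:ℝ)/(2*α)) = 3 * M^((1:ℝ)/α) := by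
    rw [hRHS]; ring
  rw [hcK, hgoalR]
  have h30 : (1 + ∑ i ∈ Far, c ^ (K * dist (x i) x₀ / r)) ≤ 3 := by linarith
  calc M^((1:ℝ)/α) * (1 + ∑ i ∈ Far, c ^ (K * dist (x i) x₀ / r))
      ≤ M^((1:ℝ)/α) * 3 := mul_le_mul_of_nonneg_left h30 (Real.rpow_nonneg hM0.le _)
    _ = 3 * M^((1:ℝ)/α) := mul_comm _ _
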